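/- For $1 \le k \le n$, let $\Gamma_k$ be the connected component of $\{\lambda \in \mathbb{R}^n : \sigma_k(\lambda) > 0\}$ containing the positive cone $\Gamma_n = \{\lambda : \lambda_i > 0 \text{ for all } i\}$, where $\sigma_k(\lambda) = \sum_{1 \le i_1 < \cdots < i_k \le n} \lambda_{i_1}\cdots\lambda_{i_k}$ is the $k$-th elementary symmetric function. Then $\Gamma_k$ is an open convex symmetric cone with vertex at the origin, and $\Gamma_n \subset \Gamma_k \subset \Gamma_1 = \{\lambda : \sum_i \lambda_i > 0\}$. -/

import Mathlib

set_option linter.unusedSectionVars false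
set_option linter.unusedVariables false
set_option maxHeartbeats 1000000

noncomputable def esym (n k : ℕ) (l : Fin n → ℝ) : ℝ :=
  ∑ s ∈ Finset.univ.powersetCard k, ∏ i ∈ s, l i

noncomputable def GammaK (n k : ℕ) : Set (Fin n → ℝ) :=
  connectedComponentIn {l | 0 < esym n k l} (fun _ => 1)

open Multiset Polynomial

namespace Gar

lemma esymm_zero' (s : Multiset ℝ) : s.esymm 0 = 1 := by simp [Multiset.esymm]

lemma esymm_cons (a : ℝ) (s : Multiset ℝ) (j : ℕ) :
    (a ::ₘ s).esymm (j+1) = s.esymm (j+1) + a * s.esymm j := by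
  rw [Multiset.esymm, powersetCard_cons, Multiset.map_add, Multiset.sum_add, Multiset.map_map]
  congr 1
  rw [Multiset.esymm, ← Multiset.sum_map_mul_left]
  congr 1
  apply Multiset.map_congr rfl
  intro t _
  simp [Function.comp, Multiset.prod_cons]

lemma esymm_of_card_lt {s : Multiset ℝ} {j : ℕ} (h : Multiset.card s < j) : s.esymm j = 0 := by
  rw [Multiset.esymm, Multiset.powersetCard_eq_empty _ h]; simp

lemma esymm_card_eq_prod (s : Multiset ℝ) : s.esymm (Multiset.card s) = s.prod := by
  induction s using Multiset.induction_on with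
  | empty => simp [Multiset.esymm]
  | cons a s ih =>
    rw [Multiset.card_cons, esymm_cons, esymm_of_card_lt (Nat.lt_succ_self _), ih, zero_add,
      Multiset.prod_cons]

lemma esymm_one_eq_sum (s : Multiset ℝ) : s.esymm 1 = s.sum := by
  induction s using Multiset.induction_on with
  | empty => rw [esymm_of_card_lt (by simp)]; simp
  | cons a s ih =>
    rw [show (1:ℕ) = 0 + 1 from rfl, esymm_cons, ih, esymm_zero', Multiset.sum_cons]; ring

lemma sq_sum_eq (s : Multiset ℝ) :
    s.sum ^ 2 = (s.map (fun x => x ^ 2)).sum + 2 * s.esymm 2 := by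
  induction s using Multiset.induction_on with
  | empty => rw [esymm_of_card_lt (by simp)]; simp
  | cons a s ih =>
    rw [Multiset.sum_cons, Multiset.map_cons, Multiset.sum_cons,
      show (2:ℕ) = 1 + 1 from rfl, esymm_cons, esymm_one_eq_sum]
    ring_nf
    ring_nf at ih
    linarith [ih]

lemma esymm_inv (μ : Multiset ℝ) (h0 : (0:ℝ) ∉ μ) :
    ∀ r ≤ Multiset.card μ,
      μ.prod * ((μ.map (fun x => x⁻¹)).esymm r) = μ.esymm (Multiset.card μ - r) := by
  induction μ using Multiset.induction_on with
  | empty =>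
    intro r hr
    rw [Multiset.card_zero, Nat.le_zero] at hr
    subst hr
    simp [esymm_zero']
  | cons a s ih =>
    have ha : a ≠ 0 := fun h => h0 (h ▸ Multiset.mem_cons_self a s)
    have h0s : (0:ℝ) ∉ s := fun h => h0 (Multiset.mem_cons_of_mem h)
    intro r hr
    rw [Multiset.card_cons] at hr ⊢
    rcases r with _ | t
    · rw [esymm_zero', mul_one, Nat.sub_zero, Multiset.prod_cons, esymm_cons,
        esymm_of_card_lt (Nat.lt_succ_self _), esymm_card_eq_prod, zero_add]
    · rw [Multiset.map_cons, esymm_cons, Multiset.prod_cons]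
      rcases eq_or_lt_of_le hr with he | hlt
      · have ht : t = Multiset.card s := by omega
        subst ht
        rw [Nat.sub_self]
        have h2 := ih h0s (Multiset.card s) le_rfl
        rw [Nat.sub_self, esymm_zero'] at h2
        rw [esymm_of_card_lt (by rw [Multiset.card_map]; exact Nat.lt_succ_self _), zero_add,
          esymm_zero']
        rw [show a * s.prod * (a⁻¹ * (s.map (fun x => x⁻¹)).esymm (Multiset.card s))
            = s.prod * (s.map (fun x => x⁻¹)).esymm (Multiset.card s) * (a * a⁻¹) from by ring,
          h2, mul_inv_cancel₀ ha]
        norm_num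
      · have ht : t + 1 ≤ Multiset.card s := by omega
        have h1 := ih h0s (t+1) ht
        have h2 := ih h0s t (by omega)
        have hct : Multiset.card s + 1 - (t+1) = (Multiset.card s - (t+1)) + 1 := by omega
        rw [hct, esymm_cons, show Multiset.card s - (t+1) + 1 = Multiset.card s - t from by omega]
        rw [← h1, ← h2]
        field_simp
        ring

lemma choose_lc (c K : ℕ) : c.choose K * c.choose (K+2) ≤ c.choose (K+1) * c.choose (K+1) := by
  rcases lt_or_ge c (K+1) with hc | hc
  · rw [Nat.choose_eq_zero_of_lt (by omega : c < K + 2)]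
    simp
  · apply Nat.le_of_mul_le_mul_right _ (show 0 < (K+1)*(K+2) by positivity)
    calc c.choose K * c.choose (K+2) * ((K+1)*(K+2))
        = (c.choose K * (K+1)) * (c.choose (K+2) * (K+2)) := by ring
      _ = (c.choose K * (K+1)) * (c.choose (K+1) * (c - (K+1))) := by
          rw [Nat.choose_succ_right_eq c (K+1)]
      _ = (c.choose K * c.choose (K+1)) * ((K+1) * (c - (K+1))) := by ring
      _ ≤ (c.choose K * c.choose (K+1)) * ((K+2) * (c - K)) :=
          Nat.mul_le_mul (le_refl _) (Nat.mul_le_mul (by omega) (by omega))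
      _ = (c.choose K * (c - K)) * (c.choose (K+1) * (K+2)) := by ring
      _ = (c.choose (K+1) * (K+1)) * (c.choose (K+1) * (K+2)) := by
          rw [← Nat.choose_succ_right_eq c K]
      _ = c.choose (K+1) * c.choose (K+1) * ((K+1)*(K+2)) := by ring

/-- Newton's inequality statement for a multiset of reals. -/
def NIN (μ : Multiset ℝ) (j : ℕ) : Prop :=
  μ.esymm (j-1) * μ.esymm (j+1) * ((Multiset.card μ).choose j : ℝ)^2 ≤
    (μ.esymm j)^2 * (((Multiset.card μ).choose (j-1) : ℝ) * ((Multiset.card μ).choose (j+1) : ℝ))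

lemma NIN_trivial {μ : Multiset ℝ} {j : ℕ} (h : Multiset.card μ < j + 1) : NIN μ j := by
  unfold NIN
  rw [esymm_of_card_lt h, mul_zero, zero_mul]
  positivity


lemma deriv_step (μ : Multiset ℝ) :
    ∃ ν : Multiset ℝ, Multiset.card ν = Multiset.card μ - 1 ∧
      ∀ r : ℕ, (Multiset.card μ : ℝ) * ν.esymm r = ((Multiset.card μ : ℝ) - r) * μ.esymm r := by
  rcases Nat.eq_zero_or_pos (Multiset.card μ) with h0 | hpos
  · have hμ : μ = 0 := Multiset.card_eq_zero.1 h0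
    subst hμ
    refine ⟨0, by simp, fun r => ?_⟩
    rcases r with _ | r
    · simp
    · rw [esymm_of_card_lt (show Multiset.card (0 : Multiset ℝ) < r+1 by simp)]; ring
  set m := Multiset.card μ - 1 with hm
  have hcard : Multiset.card μ = m + 1 := by omega
  set f : ℝ[X] := (μ.map (fun x => X + C x)).prod with hf
  have hmap : μ.map (fun x => X + C x) = (μ.map (fun x => -x)).map (fun a => X - C a) := by
    rw [Multiset.map_map]; apply Multiset.map_congr rfl; intro x _; simp [sub_neg_eq_add]
  have hmonic : f.Monic := monic_multiset_prod_of_monic _ _ (fun _ _ => monic_X_add_C _)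
  have hdeg : f.natDegree = m + 1 := by
    rw [hf, hmap, natDegree_multiset_prod_X_sub_C_eq_card, Multiset.card_map, hcard]
  set g := derivative f with hg
  have hgdeg_le : g.natDegree ≤ m := (natDegree_derivative_le f).trans (by rw [hdeg]; simp)
  have hgcard_ge : m ≤ Multiset.card g.roots := by
    have h1 : Multiset.card f.roots = m + 1 := by
      rw [show f.roots = μ.map (fun x => -x) from by
        rw [hf, hmap, roots_multiset_prod_X_sub_C], Multiset.card_map, hcard]
    have h2 : Multiset.card f.roots ≤ Multiset.card g.roots + 1 := f.card_roots_le_derivative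
    omega
  have hgcard : Multiset.card g.roots = m := le_antisymm ((card_roots' g).trans hgdeg_le) hgcard_ge
  have hgdeg : g.natDegree = m := le_antisymm hgdeg_le (hgcard ▸ card_roots' g)
  have hsplit : C g.leadingCoeff * (g.roots.map fun a => X - C a).prod = g :=
    C_leadingCoeff_mul_prod_multiset_X_sub_C (hgcard.trans hgdeg.symm)
  have hlc : g.leadingCoeff = (m : ℝ) + 1 := by
    rw [leadingCoeff, hgdeg, hg, coeff_derivative]
    rw [show f.coeff (m + 1) = 1 from hdeg ▸ hmonic.coeff_natDegree]
    ring
  set ν : Multiset ℝ := g.roots.map (fun x => -x) with hν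
  have hνcard : Multiset.card ν = m := by rw [hν, Multiset.card_map, hgcard]
  have hgprod : g = C ((m : ℝ) + 1) * (ν.map (fun x => X + C x)).prod := by
    have hmm : ν.map (fun x => X + C x) = g.roots.map (fun a => X - C a) := by
      rw [hν, Multiset.map_map]
      apply Multiset.map_congr rfl
      intro x _; simp [Function.comp, C_neg, ← sub_eq_add_neg]
    rw [← hsplit, hlc, hmm]
  refine ⟨ν, by omega, fun r => ?_⟩
  rcases le_or_gt r m with hr | hr
  · have h1 : g.coeff (m - r) = ((m : ℝ) + 1) * ν.esymm r := by
      rw [hgprod, coeff_C_mul, Multiset.prod_X_add_C_coeff ν (by rw [hνcard]; omega)]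
      congr 2
      rw [hνcard]; omega
    have h2 : g.coeff (m - r) = μ.esymm r * (((m : ℝ) - r) + 1) := by
      rw [hg, coeff_derivative]
      rw [show f.coeff (m - r + 1) = μ.esymm r from by
        rw [hf, Multiset.prod_X_add_C_coeff μ (by omega)]
        congr 1
        omega]
      have : ((m - r : ℕ) : ℝ) = (m : ℝ) - r := by
        push_cast [Nat.cast_sub hr]; ring
      rw [this]
    have h3 := h1.symm.trans h2
    rw [hcard]
    push_cast
    linarith [h3]
  · rw [esymm_of_card_lt (by rw [hνcard]; omega)]
    rcases eq_or_lt_of_le (show m + 1 ≤ r from hr) with he | hlt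
    · rw [hcard, ← he]
      simp
    · rw [esymm_of_card_lt (by omega)]
      ring


lemma NIN_transfer {μ : Multiset ℝ} {j : ℕ} (hj : 1 ≤ j) (hlt : j + 1 < Multiset.card μ)
    (H : ∀ ν : Multiset ℝ, Multiset.card ν = Multiset.card μ - 1 → NIN ν j) : NIN μ j := by
  obtain ⟨ν, hνc, hrel⟩ := deriv_step μ
  have IH := H ν hνc
  set M := Multiset.card μ with hM
  set m := M - 1 with hm
  unfold NIN at IH ⊢
  rw [hνc] at IH
  have hjm : j + 1 ≤ m := by omega
  have hMj : (j:ℝ) + 1 < (M:ℝ) := by exact_mod_cast hlt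
  have E1 := hrel (j-1)
  rw [Nat.cast_sub hj] at E1
  have E2 := hrel j
  have E3 := hrel (j+1)
  push_cast at E3
  have CID : ∀ t, t ≤ m → (M:ℝ) * (m.choose t : ℝ) = ((M:ℝ) - t) * (M.choose t : ℝ) := by
    intro t ht
    have hn : (m+1) * m.choose t = ((m+1).choose (t+1)) * (t+1) := Nat.add_one_mul_choose_eq m t
    have h2 : ((m+1).choose (t+1)) * (t+1) = (m+1).choose t * ((m+1) - t) :=
      Nat.choose_succ_right_eq (m+1) t
    have hMm : M = m + 1 := by omega
    have : M * m.choose t = M.choose t * (M - t) := by rw [hMm]; rw [hn, h2]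
    have hcast := congrArg (fun x : ℕ => (x : ℝ)) this
    push_cast [Nat.cast_sub (show t ≤ M by omega)] at hcast
    rw [hcast]; ring
  have C1 := CID (j-1) (by omega)
  rw [Nat.cast_sub hj] at C1
  have C2 := CID j (by omega)
  have C3 := CID (j+1) (by omega)
  push_cast at C3
  have hK : (0:ℝ) < ((M:ℝ) - (j:ℝ) + 1) * (((M:ℝ) - (j:ℝ) - 1) * ((M:ℝ) - (j:ℝ))^2) := by
    have h1 : (0:ℝ) < (M:ℝ) - (j:ℝ) - 1 := by linarith
    have h2 : (0:ℝ) < (M:ℝ) - (j:ℝ) + 1 := by linarith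
    have h3 : (0:ℝ) < ((M:ℝ) - (j:ℝ))^2 := by nlinarith
    positivity
  have hM4 : (0:ℝ) ≤ ((M:ℝ))^4 := by positivity
  have L : ((M:ℝ) - (j:ℝ) + 1) * (((M:ℝ) - (j:ℝ) - 1) * ((M:ℝ) - (j:ℝ))^2) *
      (μ.esymm (j-1) * μ.esymm (j+1) * ((M.choose j : ℕ):ℝ)^2)
      = ((M:ℝ))^4 * (ν.esymm (j-1) * ν.esymm (j+1) * ((m.choose j : ℕ):ℝ)^2) := by
    rw [show ((M:ℝ))^4 * (ν.esymm (j-1) * ν.esymm (j+1) * ((m.choose j : ℕ):ℝ)^2)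
        = ((M:ℝ) * ν.esymm (j-1)) * (((M:ℝ)) * ν.esymm (j+1)) *
          (((M:ℝ)) * ((m.choose j : ℕ):ℝ))^2 from by ring,
      E1, E3, C2]
    ring
  have R : ((M:ℝ) - (j:ℝ) + 1) * (((M:ℝ) - (j:ℝ) - 1) * ((M:ℝ) - (j:ℝ))^2) *
      ((μ.esymm j)^2 * (((M.choose (j-1) : ℕ):ℝ) * ((M.choose (j+1) : ℕ):ℝ)))
      = ((M:ℝ))^4 * ((ν.esymm j)^2 * (((m.choose (j-1) : ℕ):ℝ) * ((m.choose (j+1) : ℕ):ℝ))) := by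
    rw [show ((M:ℝ))^4 * ((ν.esymm j)^2 * (((m.choose (j-1) : ℕ):ℝ) * ((m.choose (j+1) : ℕ):ℝ)))
        = ((M:ℝ) * ν.esymm j)^2 *
          (((M:ℝ) * ((m.choose (j-1) : ℕ):ℝ)) * ((M:ℝ) * ((m.choose (j+1) : ℕ):ℝ))) from by ring,
      E2, C1, C3]
    ring
  have step := mul_le_mul_of_nonneg_left IH hM4
  rw [← L, ← R] at step
  exact le_of_mul_le_mul_left step hK

lemma newton_one : ∀ (n : ℕ) (μ : Multiset ℝ), Multiset.card μ = n → NIN μ 1 := by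
  intro n
  induction n using Nat.strong_induction_on with
  | _ n IH =>
    intro μ hμ
    subst hμ
    rcases lt_or_ge (Multiset.card μ) 2 with h2 | h2
    · exact NIN_trivial h2
    rcases eq_or_lt_of_le h2 with he | h3
    · -- card μ = 2
      obtain ⟨x, y, hxy⟩ := Multiset.card_eq_two.1 he.symm
      subst hxy
      unfold NIN
      have hc : Multiset.card {x, y} = 2 := rfl
      rw [hc]
      have e1 : ({x, y} : Multiset ℝ).esymm 1 = x + y := by
        rw [esymm_one_eq_sum]; simp
      have e2 : ({x, y} : Multiset ℝ).esymm 2 = x * y := by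
        rw [show (2:ℕ) = Multiset.card ({x, y} : Multiset ℝ) from hc.symm, esymm_card_eq_prod]
        simp
      rw [show (1:ℕ) - 1 = 0 from rfl, esymm_zero', e1, e2]
      norm_num [Nat.choose]
      nlinarith [sq_nonneg (x - y)]
    · exact NIN_transfer le_rfl h3 (fun ν hc => IH (Multiset.card μ - 1) (by omega) ν hc)

lemma newton_aux : ∀ (n : ℕ) (μ : Multiset ℝ), Multiset.card μ = n →
    ∀ j, 1 ≤ j → NIN μ j := by
  intro n
  induction n using Nat.strong_induction_on with
  | _ n IH =>
    intro μ hμ j hj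
    subst hμ
    rcases lt_or_ge (Multiset.card μ) (j+1) with hlt | hge
    · exact NIN_trivial hlt
    rcases lt_or_eq_of_le hge with hgt | heq
    · exact NIN_transfer hj hgt (fun ν hc => IH (Multiset.card μ - 1) (by omega) ν hc j hj)
    -- j + 1 = card μ
    rcases eq_or_lt_of_le hj with h1 | hj2
    · exact h1 ▸ newton_one _ μ rfl
    -- 2 ≤ j
    by_cases h0 : (0:ℝ) ∈ μ
    · unfold NIN
      rw [show j + 1 = Multiset.card μ from heq, esymm_card_eq_prod,
        Multiset.prod_eq_zero h0, mul_zero, zero_mul]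
      positivity
    · set N := Multiset.card μ with hN
      set τ : Multiset ℝ := μ.map (fun x => x⁻¹) with hτ
      have hτc : Multiset.card τ = N := by rw [hτ, Multiset.card_map]
      have hPne : μ.prod ≠ 0 := by
        intro h
        exact h0 (Multiset.prod_eq_zero_iff.1 h)
      have S := newton_one N τ hτc
      unfold NIN at S
      rw [hτc] at S
      have I0 := esymm_inv μ h0 0 (by omega)
      rw [esymm_zero', mul_one, Nat.sub_zero] at I0
      have I1 := esymm_inv μ h0 1 (by omega)
      have I2 := esymm_inv μ h0 2 (by omega)
      have hN1 : N - 1 = j := by omega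
      have hN2 : N - 2 = j - 1 := by omega
      rw [hN1] at I1
      rw [hN2] at I2
      rw [← hτ] at I1 I2
      unfold NIN
      have hcj : N.choose j = N.choose 1 := by
        rw [← Nat.choose_symm (show j ≤ N by omega), show N - j = 1 from by omega]
      have hcjm : N.choose (j-1) = N.choose 2 := by
        rw [← Nat.choose_symm (show j - 1 ≤ N by omega), show N - (j-1) = 2 from by omega]
      have hcjp : N.choose (j+1) = 1 := by
        rw [show j + 1 = N from heq, Nat.choose_self]
      rw [hcj, hcjm, hcjp]
      rw [show (1:ℕ) - 1 = 0 from rfl, esymm_zero'] at S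
      calc μ.esymm (j-1) * μ.esymm (j+1) * ((N.choose 1 : ℕ):ℝ)^2
          = (μ.prod * τ.esymm 2) * (μ.prod) * ((N.choose 1 : ℕ):ℝ)^2 := by
            rw [I2, show j + 1 = Multiset.card μ from heq.trans hN, ← I0]
        _ = (μ.prod)^2 * (τ.esymm 2 * ((N.choose 1 : ℕ):ℝ)^2) := by ring
        _ ≤ (μ.prod)^2 * ((τ.esymm 1)^2 * (((N.choose 0 : ℕ):ℝ) * ((N.choose 2 : ℕ):ℝ))) := by
            apply mul_le_mul_of_nonneg_left _ (by positivity : (0:ℝ) ≤ (μ.prod)^2)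
            calc τ.esymm 2 * ((N.choose 1 : ℕ):ℝ)^2
                = 1 * τ.esymm (1+1) * ((N.choose 1 : ℕ):ℝ)^2 := by norm_num
              _ ≤ (τ.esymm 1)^2 * (((N.choose 0 : ℕ):ℝ) * ((N.choose (1+1) : ℕ):ℝ)) := S
              _ = (τ.esymm 1)^2 * (((N.choose 0 : ℕ):ℝ) * ((N.choose 2 : ℕ):ℝ)) := by norm_num
        _ = (μ.prod * τ.esymm 1)^2 * (((N.choose 0 : ℕ):ℝ) * ((N.choose 2 : ℕ):ℝ)) := by ring
        _ = (μ.esymm j)^2 * (((N.choose 2 : ℕ):ℝ) * ((1 : ℕ):ℝ)) := by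
            rw [I1, Nat.choose_zero_right]
            push_cast
            ring

theorem newton (μ : Multiset ℝ) (j : ℕ) (hj : 1 ≤ j) : NIN μ j :=
  newton_aux _ μ rfl j hj


variable {ι : Type*} [DecidableEq ι]

noncomputable def es (A : Finset ι) (j : ℕ) (l : ι → ℝ) : ℝ :=
  ∑ s ∈ A.powersetCard j, ∏ i ∈ s, l i

lemma es_eq_esymm (A : Finset ι) (j : ℕ) (l : ι → ℝ) : es A j l = (A.val.map l).esymm j :=
  (Finset.esymm_map_val l A j).symm

lemma es_zero (A : Finset ι) (l : ι → ℝ) : es A 0 l = 1 := by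
  rw [es_eq_esymm, esymm_zero']

lemma es_one (A : Finset ι) (l : ι → ℝ) : es A 1 l = ∑ i ∈ A, l i := by
  rw [es_eq_esymm, esymm_one_eq_sum]
  rfl

lemma es_card_lt {A : Finset ι} {j : ℕ} (h : A.card < j) (l : ι → ℝ) : es A j l = 0 := by
  rw [es_eq_esymm, esymm_of_card_lt (by rwa [Multiset.card_map])]

lemma val_eq_cons {A : Finset ι} {i : ι} (hi : i ∈ A) :
    A.val = i ::ₘ (A.erase i).val := by
  rw [Finset.erase_val]
  exact (Multiset.cons_erase hi).symm

lemma es_erase {A : Finset ι} {i : ι} (hi : i ∈ A) (j : ℕ) (l : ι → ℝ) :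
    es A (j+1) l = es (A.erase i) (j+1) l + l i * es (A.erase i) j l := by
  rw [es_eq_esymm, es_eq_esymm, es_eq_esymm, val_eq_cons hi, Multiset.map_cons, esymm_cons]

lemma euler (A : Finset ι) (j : ℕ) (l : ι → ℝ) :
    ((j:ℝ)+1) * es A (j+1) l = ∑ i ∈ A, l i * es (A.erase i) j l := by
  have key : ∑ i ∈ A, ∑ s ∈ (A.erase i).powersetCard j, ∏ x ∈ insert i s, l x
      = ∑ t ∈ A.powersetCard (j+1), ∑ i ∈ t, ∏ x ∈ t, l x := by
    rw [Finset.sum_sigma', Finset.sum_sigma']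
    apply Finset.sum_bij'
      (i := fun (p : Σ _ : ι, Finset ι) _ => (⟨insert p.1 p.2, p.1⟩ : Σ _ : Finset ι, ι))
      (j := fun (q : Σ _ : Finset ι, ι) _ => (⟨q.2, q.1.erase q.2⟩ : Σ _ : ι, Finset ι))
    · rintro ⟨i, s⟩ hp
      rw [Finset.mem_sigma] at hp
      obtain ⟨hiA, hs⟩ := hp
      rw [Finset.mem_powersetCard] at hs
      rw [Finset.mem_sigma, Finset.mem_powersetCard]
      have hins : i ∉ s := fun h => (Finset.mem_erase.1 (hs.1 h)).1 rfl
      refine ⟨⟨?_, ?_⟩, Finset.mem_insert_self _ _⟩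
      · intro x hx
        rcases Finset.mem_insert.1 hx with h | h
        · exact h ▸ hiA
        · exact (Finset.erase_subset _ _) (hs.1 h)
      · rw [Finset.card_insert_of_notMem hins, hs.2]
    · rintro ⟨t, i⟩ hq
      rw [Finset.mem_sigma] at hq
      obtain ⟨ht, hit⟩ := hq
      rw [Finset.mem_powersetCard] at ht
      rw [Finset.mem_sigma, Finset.mem_powersetCard]
      refine ⟨ht.1 hit, ?_, ?_⟩
      · exact Finset.erase_subset_erase _ ht.1
      · rw [Finset.card_erase_of_mem hit, ht.2]
        omega
    · rintro ⟨i, s⟩ hp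
      rw [Finset.mem_sigma] at hp
      obtain ⟨_, hs⟩ := hp
      rw [Finset.mem_powersetCard] at hs
      have hins : i ∉ s := fun h => (Finset.mem_erase.1 (hs.1 h)).1 rfl
      simp [Finset.erase_insert hins]
    · rintro ⟨t, i⟩ hq
      rw [Finset.mem_sigma] at hq
      simp [Finset.insert_erase hq.2]
    · rintro ⟨i, s⟩ hp
      rfl
  have lhs : ∑ t ∈ A.powersetCard (j+1), ∑ i ∈ t, ∏ x ∈ t, l x
      = ((j:ℝ)+1) * es A (j+1) l := by
    rw [es, Finset.mul_sum]
    apply Finset.sum_congr rfl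
    intro t ht
    rw [Finset.sum_const, (Finset.mem_powersetCard.1 ht).2, nsmul_eq_mul]
    push_cast
    ring
  rw [← lhs, ← key]
  apply Finset.sum_congr rfl
  intro i hi
  rw [es, Finset.mul_sum]
  apply Finset.sum_congr rfl
  intro s hs
  rw [Finset.mem_powersetCard] at hs
  have hins : i ∉ s := fun h => (Finset.mem_erase.1 (hs.1 h)).1 rfl
  rw [Finset.prod_insert hins]


lemma newton_es (A : Finset ι) (l : ι → ℝ) (j : ℕ) (hj : 1 ≤ j) :
    es A (j-1) l * es A (j+1) l * ((A.card.choose j : ℕ):ℝ)^2 ≤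
      (es A j l)^2 * (((A.card.choose (j-1) : ℕ):ℝ) * ((A.card.choose (j+1) : ℕ):ℝ)) := by
  have h := newton (A.val.map l) j hj
  unfold NIN at h
  rw [Multiset.card_map] at h
  rw [es_eq_esymm, es_eq_esymm, es_eq_esymm]
  exact h

def Sk (A : Finset ι) (k : ℕ) (l : ι → ℝ) : Prop := ∀ j, 1 ≤ j → j ≤ k → 0 < es A j l

lemma Sk_zero (A : Finset ι) (l : ι → ℝ) : Sk A 0 l := fun _ h1 h2 => absurd (h1.trans h2) (by omega)

lemma Sk_mono {A : Finset ι} {k k' : ℕ} {l : ι → ℝ} (h : Sk A k l) (hk : k' ≤ k) : Sk A k' l :=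
  fun j h1 h2 => h j h1 (h2.trans hk)

lemma es_pos_of_Sk {A : Finset ι} {k : ℕ} {l : ι → ℝ} (h : Sk A k l) {j : ℕ} (hj : j ≤ k) :
    0 < es A j l := by
  rcases Nat.eq_zero_or_pos j with h0 | h1
  · rw [h0, es_zero]; norm_num
  · exact h j h1 hj

lemma Sk_nonempty {A : Finset ι} {k : ℕ} {l : ι → ℝ} (h : Sk A (k+1) l) : A.Nonempty := by
  rcases A.eq_empty_or_nonempty with he | hne
  · exfalso
    have h1 := h 1 le_rfl (by omega)
    rw [he, es_card_lt (by simp)] at h1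
    exact lt_irrefl _ h1
  · exact hne

lemma CS2 {a b A B : ℝ} (hA : 0 < A) (hB : 0 < B) :
    (a+b)^2/(A+B) ≤ a^2/A + b^2/B := by
  rw [div_add_div _ _ (ne_of_gt hA) (ne_of_gt hB), div_le_div_iff₀ (by positivity) (by positivity)]
  nlinarith [sq_nonneg (a*B - b*A), hA.le, hB.le, mul_pos hA hB]

theorem master : ∀ k : ℕ,
    (∀ (A : Finset ι) (l : ι → ℝ), Sk A (k+1) l → ∀ i ∈ A, Sk (A.erase i) k l) ∧
    (∀ (A : Finset ι) (x y : ι → ℝ), Sk A k x → Sk A k y →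
      es A (k+1) x / es A k x + es A (k+1) y / es A k y ≤
        es A (k+1) (fun i => x i + y i) / es A k (fun i => x i + y i)) ∧
    (∀ (A : Finset ι) (x y : ι → ℝ), Sk A (k+1) x → Sk A (k+1) y →
      Sk A (k+1) (fun i => x i + y i)) := by
  intro k
  induction k using Nat.strong_induction_on with
  | _ k IH =>
  have p1 : ∀ (A : Finset ι) (l : ι → ℝ), Sk A (k+1) l → ∀ i ∈ A, Sk (A.erase i) k l := by
    intro A l h i hi
    rcases Nat.eq_zero_or_pos k with hk0 | hkpos
    · subst hk0; exact Sk_zero _ _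
    obtain ⟨K, rfl⟩ : ∃ K, k = K + 1 := ⟨k - 1, by omega⟩
    have hlow : Sk (A.erase i) K l := (IH K (by omega)).1 A l (Sk_mono h (by omega)) i hi
    intro j hj1 hjk
    rcases lt_or_eq_of_le hjk with hlt | heq
    · exact hlow j hj1 (by omega)
    subst heq
    by_contra hneg
    push_neg at hneg
    have hsK : 0 < es (A.erase i) K l := es_pos_of_Sk hlow le_rfl
    have h1 : 0 < es A (K+1) l := h (K+1) (by omega) (by omega)
    have h2 : 0 < es A (K+2) l := h (K+2) (by omega) (by omega)
    rw [es_erase hi K l] at h1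
    rw [es_erase hi (K+1) l] at h2
    have ha : 0 < l i := by
      by_contra hle
      push_neg at hle
      nlinarith [mul_nonpos_of_nonpos_of_nonneg hle hsK.le]
    have hli : l i * es (A.erase i) (K+1) l ≤ 0 :=
      mul_nonpos_of_nonneg_of_nonpos ha.le hneg
    have hs2 : 0 < es (A.erase i) (K+2) l := by linarith
    rcases lt_or_ge (A.erase i).card (K+2) with hc | hc
    · rw [es_card_lt hc] at hs2; exact lt_irrefl _ hs2
    have NB := newton_es (A.erase i) l (K+1) (by omega)
    rw [show K + 1 - 1 = K from rfl] at NB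
    have hCK1 : (0:ℝ) < (((A.erase i).card.choose (K+1) : ℕ):ℝ) := by
      exact_mod_cast Nat.choose_pos (by omega)
    have hLC : (((A.erase i).card.choose K : ℕ):ℝ) * (((A.erase i).card.choose (K+2) : ℕ):ℝ)
        ≤ (((A.erase i).card.choose (K+1) : ℕ):ℝ) * (((A.erase i).card.choose (K+1) : ℕ):ℝ) := by
      exact_mod_cast choose_lc (A.erase i).card K
    have hne : es (A.erase i) (K+1) l < 0 := by
      rcases lt_or_eq_of_le hneg with h' | h'
      · exact h'
      · exfalso
        rw [h'] at NB
        nlinarith [mul_pos (mul_pos hsK hs2) (mul_pos hCK1 hCK1)]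
    have h5 : -(es (A.erase i) (K+1) l) < l i * es (A.erase i) K l := by linarith
    have h6 : -(l i * es (A.erase i) (K+1) l) < es (A.erase i) (K+2) l := by linarith
    have k1 : (-(es (A.erase i) (K+1) l)) * (-(es (A.erase i) (K+1) l))
        < (l i * es (A.erase i) K l) * (-(es (A.erase i) (K+1) l)) :=
      mul_lt_mul_of_pos_right h5 (by linarith)
    have k2 : (l i * es (A.erase i) K l) * (-(es (A.erase i) (K+1) l))
        = (-(l i * es (A.erase i) (K+1) l)) * es (A.erase i) K l := by ring
    have k3 : (-(l i * es (A.erase i) (K+1) l)) * es (A.erase i) K l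
        < es (A.erase i) (K+2) l * es (A.erase i) K l :=
      mul_lt_mul_of_pos_right h6 hsK
    have key : es (A.erase i) (K+1) l * es (A.erase i) (K+1) l
        < es (A.erase i) K l * es (A.erase i) (K+2) l := by nlinarith [k1, k3]
    nlinarith [NB, mul_lt_mul_of_pos_right key (mul_pos hCK1 hCK1),
      mul_le_mul_of_nonneg_left hLC (sq_nonneg (es (A.erase i) (K+1) l))]
  have p2 : ∀ (A : Finset ι) (x y : ι → ℝ), Sk A k x → Sk A k y →
      es A (k+1) x / es A k x + es A (k+1) y / es A k y ≤
        es A (k+1) (fun i => x i + y i) / es A k (fun i => x i + y i) := by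
    intro A x y hx hy
    rcases Nat.eq_zero_or_pos k with hk0 | hkpos
    · subst hk0
      simp only [show (0:ℕ)+1 = 1 from rfl, es_zero, div_one, es_one]
      rw [Finset.sum_add_distrib]
    obtain ⟨K, rfl⟩ : ∃ K, k = K + 1 := ⟨k - 1, by omega⟩
    have F := (IH K (by omega)).1
    have MLGprev := (IH K (by omega)).2.1
    have ADDprev := (IH K (by omega)).2.2
    have hxy : Sk A (K+1) (fun i => x i + y i) := ADDprev A x y hx hy
    have hdx : 0 < es A (K+1) x := es_pos_of_Sk hx le_rfl
    have hdy : 0 < es A (K+1) y := es_pos_of_Sk hy le_rfl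
    have hdxy : 0 < es A (K+1) (fun i => x i + y i) := es_pos_of_Sk hxy le_rfl
    have hQ : ∀ i ∈ A,
        (x i + y i)^2 * es (A.erase i) K (fun i => x i + y i)
            / es A (K+1) (fun i => x i + y i)
          ≤ x i^2 * es (A.erase i) K x / es A (K+1) x
            + y i^2 * es (A.erase i) K y / es A (K+1) y := by
      intro i hi
      have hex : 0 < es (A.erase i) K x := es_pos_of_Sk (F A x hx i hi) le_rfl
      have hey : 0 < es (A.erase i) K y := es_pos_of_Sk (F A y hy i hi) le_rfl
      have hexy : 0 < es (A.erase i) K (fun i => x i + y i) :=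
        es_pos_of_Sk (F A _ hxy i hi) le_rfl
      have hax : es A (K+1) x / es (A.erase i) K x
          = x i + es (A.erase i) (K+1) x / es (A.erase i) K x := by
        rw [es_erase hi K x]
        field_simp
        ring
      have hay : es A (K+1) y / es (A.erase i) K y
          = y i + es (A.erase i) (K+1) y / es (A.erase i) K y := by
        rw [es_erase hi K y]
        field_simp
        ring
      have haxy : es A (K+1) (fun i => x i + y i) / es (A.erase i) K (fun i => x i + y i)
          = (x i + y i) + es (A.erase i) (K+1) (fun i => x i + y i)
              / es (A.erase i) K (fun i => x i + y i) := by
        rw [es_erase hi K (fun i => x i + y i)]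
        field_simp
        ring
      have hAx : 0 < es A (K+1) x / es (A.erase i) K x := div_pos hdx hex
      have hAy : 0 < es A (K+1) y / es (A.erase i) K y := div_pos hdy hey
      have hsup := MLGprev (A.erase i) x y (F A x hx i hi) (F A y hy i hi)
      have hD : es A (K+1) x / es (A.erase i) K x + es A (K+1) y / es (A.erase i) K y
          ≤ es A (K+1) (fun i => x i + y i) / es (A.erase i) K (fun i => x i + y i) := by
        rw [hax, hay, haxy]
        linarith
      calc (x i + y i)^2 * es (A.erase i) K (fun i => x i + y i)
              / es A (K+1) (fun i => x i + y i)
          = (x i + y i)^2 / (es A (K+1) (fun i => x i + y i)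
              / es (A.erase i) K (fun i => x i + y i)) := (div_div_eq_mul_div _ _ _).symm
        _ ≤ (x i + y i)^2 / (es A (K+1) x / es (A.erase i) K x
              + es A (K+1) y / es (A.erase i) K y) := by
            exact div_le_div_of_nonneg_left (sq_nonneg _) (by positivity) hD
        _ ≤ (x i)^2 / (es A (K+1) x / es (A.erase i) K x)
              + (y i)^2 / (es A (K+1) y / es (A.erase i) K y) := CS2 hAx hAy
        _ = x i^2 * es (A.erase i) K x / es A (K+1) x
              + y i^2 * es (A.erase i) K y / es A (K+1) y := by
            rw [div_div_eq_mul_div, div_div_eq_mul_div]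
    have hsum := Finset.sum_le_sum hQ
    rw [Finset.sum_add_distrib] at hsum
    have idz : ∀ z : ι → ℝ, Sk A (K+1) z →
        ((K:ℝ)+1+1) * (es A (K+1+1) z / es A (K+1) z)
          = (∑ i ∈ A, z i) - ∑ i ∈ A, z i^2 * es (A.erase i) K z / es A (K+1) z := by
      intro z hz
      have hd : (0:ℝ) < es A (K+1) z := es_pos_of_Sk hz le_rfl
      have he := euler A (K+1) z
      push_cast at he
      have he2 : ((K:ℝ)+1+1) * es A (K+1+1) z
          = (∑ i ∈ A, z i) * es A (K+1) z - ∑ i ∈ A, z i^2 * es (A.erase i) K z := by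
        rw [he, Finset.sum_mul, ← Finset.sum_sub_distrib]
        apply Finset.sum_congr rfl
        intro i hi
        rw [es_erase hi K z]
        ring
      rw [← Finset.sum_div, ← mul_div_assoc, eq_sub_iff_add_eq, ← add_div,
        div_eq_iff (ne_of_gt hd)]
      linarith [he2]
    have ix := idz x hx
    have iy := idz y hy
    have ixy := idz (fun i => x i + y i) hxy
    beta_reduce at ixy
    have hsums : ∑ i ∈ A, (x i + y i) = ∑ i ∈ A, x i + ∑ i ∈ A, y i :=
      Finset.sum_add_distrib
    apply le_of_mul_le_mul_left _ (show (0:ℝ) < (K:ℝ)+1+1 by positivity)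
    rw [mul_add, ix, iy, ixy]
    linarith [hsum]
  have p3 : ∀ (A : Finset ι) (x y : ι → ℝ), Sk A (k+1) x → Sk A (k+1) y →
      Sk A (k+1) (fun i => x i + y i) := by
    intro A x y hx hy j hj1 hjk
    rcases lt_or_eq_of_le hjk with hlt | heq
    · rcases Nat.eq_zero_or_pos k with hk0 | hkpos
      · omega
      obtain ⟨K, rfl⟩ : ∃ K, k = K + 1 := ⟨k - 1, by omega⟩
      exact (IH K (by omega)).2.2 A x y (Sk_mono hx (by omega)) (Sk_mono hy (by omega))
        j hj1 (by omega)
    subst heq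
    obtain ⟨i, hi⟩ := Sk_nonempty hx
    have hBx := p1 A x hx i hi
    have hBy := p1 A y hy i hi
    have hdBx : 0 < es (A.erase i) k x := es_pos_of_Sk hBx le_rfl
    have hdBy : 0 < es (A.erase i) k y := es_pos_of_Sk hBy le_rfl
    have hBxy : Sk (A.erase i) k (fun i => x i + y i) := by
      rcases Nat.eq_zero_or_pos k with hk0 | hkpos
      · subst hk0; exact Sk_zero _ _
      obtain ⟨K, rfl⟩ : ∃ K, k = K + 1 := ⟨k - 1, by omega⟩
      exact (IH K (by omega)).2.2 _ x y hBx hBy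
    have hdBxy : 0 < es (A.erase i) k (fun i => x i + y i) := es_pos_of_Sk hBxy le_rfl
    have hex : 0 < es A (k+1) x := hx _ (by omega) le_rfl
    have hey : 0 < es A (k+1) y := hy _ (by omega) le_rfl
    rw [es_erase hi k x] at hex
    rw [es_erase hi k y] at hey
    have hrx : -(x i) < es (A.erase i) (k+1) x / es (A.erase i) k x := by
      rw [lt_div_iff₀ hdBx]
      linarith
    have hry : -(y i) < es (A.erase i) (k+1) y / es (A.erase i) k y := by
      rw [lt_div_iff₀ hdBy]
      linarith
    have hsup := p2 (A.erase i) x y hBx hBy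
    have hlast : -(x i + y i)
        < es (A.erase i) (k+1) (fun i => x i + y i) / es (A.erase i) k (fun i => x i + y i) := by
      linarith
    rw [lt_div_iff₀ hdBxy] at hlast
    rw [es_erase hi k (fun i => x i + y i)]
    show 0 < es (A.erase i) (k+1) (fun i => x i + y i)
        + (x i + y i) * es (A.erase i) k (fun i => x i + y i)
    linarith
  exact ⟨p1, p2, p3⟩


/-! ## derivative chain and cascade -/

lemma deriv_chain (μ : Multiset ℝ) :
    ∀ d, d ≤ Multiset.card μ →
      ∃ ν : Multiset ℝ, Multiset.card ν = Multiset.card μ - d ∧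
        ∀ r, r ≤ Multiset.card μ - d → ∃ c : ℝ, 0 < c ∧ ν.esymm r = c * μ.esymm r := by
  intro d
  induction d with
  | zero =>
    intro _
    exact ⟨μ, by simp, fun r _ => ⟨1, by norm_num⟩⟩
  | succ d ih =>
    intro hd
    obtain ⟨ν, hνc, hν⟩ := ih (by omega)
    obtain ⟨ρ, hρc, hρ⟩ := deriv_step ν
    refine ⟨ρ, by omega, fun r hr => ?_⟩
    obtain ⟨c, hc, hce⟩ := hν r (by omega)
    have hrel := hρ r
    have hνcpos : 0 < Multiset.card ν := by omega
    have hrlt : r < Multiset.card ν := by omega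
    have hcν : (0:ℝ) < (Multiset.card ν : ℝ) := by exact_mod_cast hνcpos
    have hfac : (0:ℝ) < ((Multiset.card ν : ℝ) - r) := by
      have : (r:ℝ) < (Multiset.card ν : ℝ) := by exact_mod_cast hrlt
      linarith
    refine ⟨((Multiset.card ν : ℝ) - r) / (Multiset.card ν : ℝ) * c, by positivity, ?_⟩
    have : ρ.esymm r = ((Multiset.card ν : ℝ) - r) / (Multiset.card ν : ℝ) * ν.esymm r := by
      field_simp
      linarith [hrel]
    rw [this, hce]
    ring

lemma cascade_ms (μ : Multiset ℝ) (k : ℕ) (hk1 : 1 ≤ k) (hkn : k ≤ Multiset.card μ)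
    (hnn : ∀ j, 1 ≤ j → j ≤ k → 0 ≤ μ.esymm j) (hpos : 0 < μ.esymm k) :
    ∀ j, 1 ≤ j → j ≤ k → 0 < μ.esymm j := by
  by_contra hcon
  push_neg at hcon
  obtain ⟨j, hj1, hjk, hle⟩ := hcon
  set T := (Finset.Icc 1 k).filter (fun j => μ.esymm j ≤ 0) with hT
  have hTne : T.Nonempty := ⟨j, by simp [hT, Finset.mem_Icc]; exact ⟨⟨hj1, hjk⟩, hle⟩⟩
  set j₀ := T.max' hTne with hj₀
  have hj₀T : j₀ ∈ T := T.max'_mem hTne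
  have hj₀Icc : 1 ≤ j₀ ∧ j₀ ≤ k := by
    have := Finset.mem_filter.1 hj₀T
    simpa [Finset.mem_Icc] using this.1
  have hj₀le : μ.esymm j₀ ≤ 0 := (Finset.mem_filter.1 hj₀T).2
  have hj₀eq : μ.esymm j₀ = 0 := le_antisymm hj₀le (hnn j₀ hj₀Icc.1 hj₀Icc.2)
  have hj₀k : j₀ < k := by
    rcases lt_or_eq_of_le hj₀Icc.2 with h | h
    · exact h
    · rw [h] at hj₀eq; rw [hj₀eq] at hpos; exact absurd hpos (lt_irrefl 0)
  have hup : ∀ r, j₀ < r → r ≤ k → 0 < μ.esymm r := by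
    intro r hr1 hr2
    by_contra hr
    push_neg at hr
    have hrT : r ∈ T := by
      rw [hT, Finset.mem_filter, Finset.mem_Icc]
      exact ⟨⟨by omega, hr2⟩, hr⟩
    have := T.le_max' r hrT
    omega
  have hN := newton μ j₀ hj₀Icc.1
  unfold NIN at hN
  rw [hj₀eq] at hN
  norm_num at hN
  have hjp1 : 0 < μ.esymm (j₀+1) := hup (j₀+1) (by omega) (by omega)
  have hCpos : (0:ℝ) < (((Multiset.card μ).choose j₀ : ℕ):ℝ) := by
    exact_mod_cast Nat.choose_pos (by omega)
  have hjm : μ.esymm (j₀-1) ≤ 0 := by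
    nlinarith [hN, mul_pos hjp1 (pow_pos hCpos 2)]
  rcases eq_or_lt_of_le hj₀Icc.1 with h1 | h2
  · -- j₀ = 1 : esymm 0 = 1 > 0 contradiction
    rw [← h1] at hjm
    rw [esymm_zero'] at hjm
    linarith
  -- j₀ ≥ 2
  have hjmeq : μ.esymm (j₀-1) = 0 := le_antisymm hjm (hnn (j₀-1) (by omega) (by omega))
  obtain ⟨ρ, hρc, hρ⟩ := deriv_chain μ (Multiset.card μ - (j₀+1)) (by omega)
  have hρcard : Multiset.card ρ = j₀ + 1 := by omega
  have hval : ∀ r, r ≤ j₀ + 1 → ∃ c : ℝ, 0 < c ∧ ρ.esymm r = c * μ.esymm r := by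
    intro r hr
    exact hρ r (by omega)
  obtain ⟨c1, hc1, he1⟩ := hval (j₀+1) le_rfl
  obtain ⟨c2, hc2, he2⟩ := hval j₀ (by omega)
  obtain ⟨c3, hc3, he3⟩ := hval (j₀-1) (by omega)
  have hρtop : 0 < ρ.esymm (j₀+1) := by rw [he1]; positivity
  have hρj : ρ.esymm j₀ = 0 := by rw [he2, hj₀eq, mul_zero]
  have hρjm : ρ.esymm (j₀-1) = 0 := by rw [he3, hjmeq, mul_zero]
  have hρprod : 0 < ρ.prod := by
    rw [← esymm_card_eq_prod, hρcard]; exact hρtop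
  have h0ρ : (0:ℝ) ∉ ρ := by
    intro h
    rw [Multiset.prod_eq_zero h] at hρprod
    exact absurd hρprod (lt_irrefl 0)
  have hI1 := esymm_inv ρ h0ρ 1 (by omega)
  have hI2 := esymm_inv ρ h0ρ 2 (by omega)
  rw [hρcard, show j₀ + 1 - 1 = j₀ from by omega, hρj] at hI1
  rw [hρcard, show j₀ + 1 - 2 = j₀ - 1 from by omega, hρjm] at hI2
  have hpne : ρ.prod ≠ 0 := ne_of_gt hρprod
  have hτ1 : (ρ.map (fun x => x⁻¹)).esymm 1 = 0 := by
    rcases mul_eq_zero.1 hI1 with h | h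
    · exact absurd h hpne
    · exact h
  have hτ2 : (ρ.map (fun x => x⁻¹)).esymm 2 = 0 := by
    rcases mul_eq_zero.1 hI2 with h | h
    · exact absurd h hpne
    · exact h
  have hsq := sq_sum_eq (ρ.map (fun x => x⁻¹))
  rw [← esymm_one_eq_sum, hτ1, hτ2] at hsq
  have hsum0 : ((ρ.map (fun x => x⁻¹)).map (fun x => x ^ 2)).sum = 0 := by linarith
  have hτne : ρ.map (fun x => x⁻¹) ≠ 0 := by
    intro h
    have := congrArg Multiset.card h
    rw [Multiset.card_map, hρcard] at this
    simp at this
  obtain ⟨a, ha⟩ := Multiset.exists_mem_of_ne_zero hτne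
  have hane : a ≠ 0 := by
    obtain ⟨b, hb, hba⟩ := Multiset.mem_map.1 ha
    intro h
    rw [← hba, inv_eq_zero] at h
    exact h0ρ (h ▸ hb)
  have hmem : a^2 ∈ (ρ.map (fun x => x⁻¹)).map (fun x => x ^ 2) :=
    Multiset.mem_map_of_mem _ ha
  have hle2 : a^2 ≤ 0 := by
    rw [← hsum0]
    exact Multiset.single_le_sum (fun x hx => by
      obtain ⟨b, _, hb⟩ := Multiset.mem_map.1 hx
      rw [← hb]; positivity) _ hmem
  have : a^2 > 0 := by positivity
  linarith


/-! ## Final layer -/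

lemma esym_eq_es (n j : ℕ) (l : Fin n → ℝ) : esym n j l = es Finset.univ j l := rfl

lemma esym_continuous (n j : ℕ) : Continuous (esym n j) := by
  unfold esym
  exact continuous_finset_sum _ fun s _ => continuous_finset_prod _ fun i _ => continuous_apply i

def SS (n k : ℕ) : Set (Fin n → ℝ) := {l | ∀ j, 1 ≤ j → j ≤ k → 0 < esym n j l}

lemma SS_isOpen (n k : ℕ) : IsOpen (SS n k) := by
  have h : SS n k = ⋂ j ∈ Finset.Icc 1 k, {l : Fin n → ℝ | 0 < esym n j l} := by
    ext l
    simp only [SS, Set.mem_setOf_eq, Set.mem_iInter, Finset.mem_Icc, and_imp]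
  rw [h]
  exact isOpen_biInter_finset fun j _ => isOpen_lt continuous_const (esym_continuous n j)

lemma esym_pos_of_pos {n : ℕ} {l : Fin n → ℝ} (h : ∀ i, 0 < l i) {j : ℕ} (hj : j ≤ n) :
    0 < esym n j l := by
  unfold esym
  apply Finset.sum_pos
  · intro s _
    exact Finset.prod_pos fun i _ => h i
  · exact Finset.powersetCard_nonempty.2 (by simpa using hj)

lemma esym_smul (n j : ℕ) (c : ℝ) (l : Fin n → ℝ) :
    esym n j (c • l) = c^j * esym n j l := by
  unfold esym
  rw [Finset.mul_sum]
  apply Finset.sum_congr rfl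
  intro s hs
  have h : ∀ i ∈ s, (c • l) i = c * l i := fun i _ => rfl
  rw [Finset.prod_congr rfl h, Finset.prod_mul_distrib, Finset.prod_const,
    (Finset.mem_powersetCard.1 hs).2]

lemma esym_perm (n j : ℕ) (l : Fin n → ℝ) (σ : Equiv.Perm (Fin n)) :
    esym n j (l ∘ σ) = esym n j l := by
  rw [esym_eq_es, esym_eq_es, es_eq_esymm, es_eq_esymm]
  congr 1
  rw [show Multiset.map (l ∘ σ) Finset.univ.val
      = Multiset.map l (Multiset.map σ Finset.univ.val) from (Multiset.map_map _ _ _).symm]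
  congr 1
  calc Multiset.map (⇑σ) Finset.univ.val = (Finset.univ.map σ.toEmbedding).val := rfl
    _ = Finset.univ.val := by rw [Finset.map_univ_equiv]

lemma SS_add {n k : ℕ} {x y : Fin n → ℝ} (hk : 1 ≤ k) (hx : x ∈ SS n k) (hy : y ∈ SS n k) :
    (fun i => x i + y i) ∈ SS n k := by
  obtain ⟨K, rfl⟩ : ∃ K, k = K + 1 := ⟨k - 1, by omega⟩
  exact (master K).2.2 Finset.univ x y hx hy

lemma SS_convex {n k : ℕ} (hk : 1 ≤ k) : Convex ℝ (SS n k) := by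
  intro x hx y hy a b ha hb hab
  rcases eq_or_lt_of_le ha with ha0 | ha0
  · have hb1 : b = 1 := by linarith
    rw [← ha0, hb1]
    simpa using hy
  rcases eq_or_lt_of_le hb with hb0 | hb0
  · have ha1 : a = 1 := by linarith
    rw [← hb0, ha1]
    simpa using hx
  have hax : a • x ∈ SS n k := fun j hj1 hjk => by
    rw [esym_smul]
    exact mul_pos (pow_pos ha0 j) (hx j hj1 hjk)
  have hby : b • y ∈ SS n k := fun j hj1 hjk => by
    rw [esym_smul]
    exact mul_pos (pow_pos hb0 j) (hy j hj1 hjk)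
  exact SS_add hk hax hby

lemma card_univ_val (n : ℕ) : Multiset.card (Finset.univ : Finset (Fin n)).val = n := by
  have h : (Finset.univ : Finset (Fin n)).card = n := by simp
  exact h

lemma GammaK_eq {n k : ℕ} (hk : 1 ≤ k) (hkn : k ≤ n) : GammaK n k = SS n k := by
  have hone : (fun _ => (1:ℝ)) ∈ SS n k := fun j hj1 hjk =>
    esym_pos_of_pos (fun _ => one_pos) (hjk.trans hkn)
  have hsub : SS n k ⊆ {l | 0 < esym n k l} := fun l hl => hl k hk le_rfl
  have honeU : (fun _ => (1:ℝ)) ∈ {l : Fin n → ℝ | 0 < esym n k l} := hsub hone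
  apply Set.Subset.antisymm
  · intro l hl
    have hpre : IsPreconnected (GammaK n k) := isPreconnected_connectedComponentIn
    have hsubU : GammaK n k ⊆ {l | 0 < esym n k l} := connectedComponentIn_subset _ _
    by_contra hnot
    set v : Set (Fin n → ℝ) := ⋃ j ∈ Finset.Icc 1 k, {l | esym n j l < 0} with hv
    have hvopen : IsOpen v :=
      isOpen_biUnion fun j _ => isOpen_lt (esym_continuous n j) continuous_const
    have hcover : GammaK n k ⊆ SS n k ∪ v := by
      intro z hz
      by_cases hzv : z ∈ v
      · exact Or.inr hzv
      left
      have hnn : ∀ j, 1 ≤ j → j ≤ k → 0 ≤ esym n j z := by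
        intro j h1 h2
        by_contra hneg
        push_neg at hneg
        exact hzv (Set.mem_biUnion (Finset.mem_Icc.2 ⟨h1, h2⟩) hneg)
      have hkz : 0 < esym n k z := hsubU hz
      have hbridge : ∀ j, esym n j z = (Finset.univ.val.map z).esymm j := fun j =>
        es_eq_esymm _ j z
      have hcard : Multiset.card (Finset.univ.val.map z) = n := by
        rw [Multiset.card_map, card_univ_val]
      intro j h1 h2
      rw [hbridge j]
      refine cascade_ms (Finset.univ.val.map z) k hk (by rw [hcard]; exact hkn)
        (fun j h1 h2 => by rw [← hbridge j]; exact hnn j h1 h2)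
        (by rw [← hbridge k]; exact hkz) j h1 h2
    have hne1 : (GammaK n k ∩ SS n k).Nonempty :=
      ⟨_, mem_connectedComponentIn honeU, hone⟩
    have hne2 : (GammaK n k ∩ v).Nonempty := ⟨l, hl, (hcover hl).resolve_left hnot⟩
    obtain ⟨w, hwG, hwS, hwv⟩ :=
      hpre (SS n k) v (SS_isOpen n k) hvopen hcover hne1 hne2
    obtain ⟨j, hjIcc, hjlt⟩ := Set.mem_iUnion₂.1 hwv
    rw [Finset.mem_Icc] at hjIcc
    exact absurd (hwS j hjIcc.1 hjIcc.2) (not_lt.2 hjlt.le)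
  · exact (SS_convex hk).isPreconnected.subset_connectedComponentIn hone hsub


end Gar

open Gar in
theorem stmt8 {n k : ℕ} (hk : 1 ≤ k) (hkn : k ≤ n) :
    IsOpen (GammaK n k) ∧ Convex ℝ (GammaK n k) ∧
      (∀ l ∈ GammaK n k, ∀ σ : Equiv.Perm (Fin n), (l ∘ σ) ∈ GammaK n k) ∧
      (∀ l ∈ GammaK n k, ∀ s : ℝ, 0 < s → s • l ∈ GammaK n k) ∧
      {l : Fin n → ℝ | ∀ i, 0 < l i} ⊆ GammaK n k ∧
      GammaK n k ⊆ {l : Fin n → ℝ | 0 < ∑ i, l i} := by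
  have hEq := GammaK_eq hk hkn
  refine ⟨?_, ?_, ?_, ?_, ?_, ?_⟩
  · rw [hEq]; exact SS_isOpen n k
  · rw [hEq]; exact SS_convex hk
  · intro l hl σ
    rw [hEq] at hl ⊢
    intro j h1 h2
    rw [esym_perm]
    exact hl j h1 h2
  · intro l hl s hs
    rw [hEq] at hl ⊢
    intro j h1 h2
    rw [esym_smul]
    exact mul_pos (pow_pos hs j) (hl j h1 h2)
  · intro l hl
    rw [hEq]
    intro j h1 h2
    exact esym_pos_of_pos hl (h2.trans hkn)
  · intro l hl
    rw [hEq] at hl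
    have h1 := hl 1 le_rfl hk
    rw [esym_eq_es, es_one] at h1
    exact h1
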